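/- For any bounded functions f, g : ℕ → ℂ one has AE(f + g) ≤ AE(f) + AE(g), AE(f − g) ≤ AE(f) + AE(g), AE(f · g) ≤ AE(f) + AE(g), and moreover AE(f) ≤ AE(f + g) + AE(g) and AE(g) ≤ AE(f + g) + AE(f) (so that |AE(f) − AE(g)| ≤ AE(f ± g) whenever the difference is defined). -/

import Mathlib

open Filter Set Topology

namespace Anqie

variable {X : Type*} [TopologicalSpace X]

/-- `𝒰` is an open cover of `X`. -/
def IsOpenCover (𝒰 : Set (Set X)) : Prop :=
  (∀ U ∈ 𝒰, IsOpen U) ∧ ⋃₀ 𝒰 = Set.univ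

/-- The common refinement `𝒰 ∨ T⁻¹ 𝒰 ∨ ⋯ ∨ T^{-(n-1)} 𝒰`. -/
def iterJoin (T : X → X) (𝒰 : Set (Set X)) (n : ℕ) : Set (Set X) :=
  {V | ∃ u : Fin n → Set X, (∀ j, u j ∈ 𝒰) ∧ V = ⋂ j : Fin n, T^[(j : ℕ)] ⁻¹' u j}

/-- The minimal cardinality of a finite subcover of `𝒱` (junk value `0` if none exists). -/
noncomputable def coverNum (𝒱 : Set (Set X)) : ℕ :=
  sInf {k | ∃ F : Finset (Set X), (↑F : Set (Set X)) ⊆ 𝒱 ∧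
    ⋃₀ (↑F : Set (Set X)) = Set.univ ∧ F.card = k}

/-- The Adler–Konheim–McAndrew entropy of `T` relative to the open cover `𝒰`. -/
noncomputable def coverEntropy (T : X → X) (𝒰 : Set (Set X)) : EReal :=
  Filter.atTop.limsup fun n : ℕ =>
    ((Real.log (coverNum (iterJoin T 𝒰 n)) / n : ℝ) : EReal)

/-- The Adler–Konheim–McAndrew topological entropy of `T`, via open covers. -/
noncomputable def entropy (T : X → X) : EReal :=
  ⨆ 𝒰 ∈ {𝒰 : Set (Set X) | IsOpenCover 𝒰}, coverEntropy T 𝒰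

/-- The set of forward-orbit sequences of `f : ℕ → X` inside `X^ℕ`. -/
def orbitSet (f : ℕ → X) : Set (ℕ → X) :=
  {ω | ∃ n : ℕ, ∀ k : ℕ, ω k = f (n + k)}

/-- `X_f`, the closure of the set of orbit sequences in the product topology. -/
def orbitClosure (f : ℕ → X) : Set (ℕ → X) := closure (orbitSet f)

lemma shift_mem_orbitClosure (f : ℕ → X) {ω : ℕ → X} (hω : ω ∈ orbitClosure f) :
    (fun k => ω (k + 1)) ∈ orbitClosure f := by
  have hcont : Continuous fun ω : ℕ → X => fun k => ω (k + 1) :=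
    continuous_pi fun k => continuous_apply (k + 1)
  have hmaps : MapsTo (fun ω : ℕ → X => fun k => ω (k + 1)) (orbitSet f) (orbitSet f) := by
    rintro ω ⟨n, hn⟩
    refine ⟨n + 1, fun k => ?_⟩
    show ω (k + 1) = f (n + 1 + k)
    rw [hn (k + 1)]; congr 1; omega
  exact map_mem_closure hcont hω hmaps

/-- `B_f`, the left shift restricted to `X_f`. -/
def shiftOn (f : ℕ → X) : orbitClosure f → orbitClosure f :=
  fun ω => ⟨fun k => (ω : ℕ → X) (k + 1), shift_mem_orbitClosure f ω.2⟩

/-- The anqie entropy of a map `f : ℕ → X`: the AKM topological entropy of the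
left shift on `X_f`. -/
noncomputable def AE (f : ℕ → X) : EReal := entropy (shiftOn f)

end Anqie

namespace Anqie

set_option linter.unusedSectionVars false

open Filter Set

variable {X Y : Type*} [TopologicalSpace X] [TopologicalSpace Y]

lemma iterJoin_isOpenCover {T : X → X} (hT : Continuous T) {𝒰 : Set (Set X)}
    (h𝒰 : IsOpenCover 𝒰) (n : ℕ) : IsOpenCover (iterJoin T 𝒰 n) := by
  constructor
  · rintro V ⟨u, hu, rfl⟩
    exact isOpen_iInter_of_finite fun j =>
      ((h𝒰.1 _ (hu j)).preimage (hT.iterate _))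
  · apply eq_univ_of_forall
    intro x
    have : ∀ j : Fin n, ∃ U ∈ 𝒰, T^[(j:ℕ)] x ∈ U := by
      intro j
      have hx : T^[(j:ℕ)] x ∈ ⋃₀ 𝒰 := h𝒰.2.symm ▸ Set.mem_univ _
      simpa [Set.mem_sUnion] using hx
    choose u hu hxu using this
    exact ⟨_, ⟨u, hu, rfl⟩, Set.mem_iInter.2 fun j => hxu j⟩

/-- In a compact space, any open cover admits a finite subcover realizing `coverNum`. -/
lemma exists_finite_subcover [CompactSpace X] {𝒱 : Set (Set X)} (h : IsOpenCover 𝒱) :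
    ∃ F : Finset (Set X), (↑F : Set (Set X)) ⊆ 𝒱 ∧ ⋃₀ (↑F : Set (Set X)) = Set.univ ∧
      F.card = coverNum 𝒱 := by
  obtain ⟨s, hs𝒱, hsfin, hscov⟩ := IsCompact.elim_finite_subcover_image (b := 𝒱)
    (c := id) isCompact_univ h.1 (by simp only [id]; rw [← Set.sUnion_eq_biUnion, h.2])
  have hne : {k | ∃ F : Finset (Set X), (↑F : Set (Set X)) ⊆ 𝒱 ∧
      ⋃₀ (↑F : Set (Set X)) = Set.univ ∧ F.card = k}.Nonempty := by
    refine ⟨hsfin.toFinset.card, hsfin.toFinset, ?_, ?_, rfl⟩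
    · rw [Set.Finite.coe_toFinset]; exact hs𝒱
    · rw [Set.Finite.coe_toFinset, Set.sUnion_eq_biUnion]
      refine Set.eq_univ_of_univ_subset ?_
      simpa only [id] using hscov
  have := Nat.sInf_mem hne
  exact ⟨this.choose, this.choose_spec.1, this.choose_spec.2.1, this.choose_spec.2.2⟩

lemma coverNum_le_card {𝒱 : Set (Set X)} {F : Finset (Set X)}
    (hF : (↑F : Set (Set X)) ⊆ 𝒱) (hcov : ⋃₀ (↑F : Set (Set X)) = Set.univ) :
    coverNum 𝒱 ≤ F.card :=
  Nat.sInf_le ⟨F, hF, hcov, rfl⟩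

lemma coverNum_pos [Nonempty X] {𝒱 : Set (Set X)} {F : Finset (Set X)}
    (hF : (↑F : Set (Set X)) ⊆ 𝒱) (hcov : ⋃₀ (↑F : Set (Set X)) = Set.univ)
    (hcard : F.card = coverNum 𝒱) : 0 < coverNum 𝒱 := by
  rw [← hcard, Finset.card_pos]
  by_contra h
  rw [Finset.not_nonempty_iff_eq_empty] at h
  subst h
  simp only [Finset.coe_empty, Set.sUnion_empty] at hcov
  exact (Set.univ_nonempty.ne_empty hcov.symm).elim

end Anqie

namespace Anqie

set_option linter.unusedSectionVars false

open Filter Set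

variable {X Y : Type*} [TopologicalSpace X] [TopologicalSpace Y]

lemma log_nat_mono {m k : ℕ} (h : m ≤ k) : Real.log m ≤ Real.log k := by
  rcases Nat.eq_zero_or_pos m with hm | hm
  · subst hm
    simpa using Real.log_natCast_nonneg k
  · exact Real.log_le_log (by exact_mod_cast hm) (by exact_mod_cast h)

/-- If the cover numbers of the iterated joins are pointwise smaller, the
cover entropy is smaller. -/
lemma coverEntropy_mono {T : X → X} {S : Y → Y} {𝒰 : Set (Set Y)} {𝒱 : Set (Set X)}
    (h : ∀ n, coverNum (iterJoin S 𝒰 n) ≤ coverNum (iterJoin T 𝒱 n)) :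
    coverEntropy S 𝒰 ≤ coverEntropy T 𝒱 := by
  refine Filter.limsup_le_limsup (Filter.Eventually.of_forall fun n => ?_)
  have hlog : Real.log (coverNum (iterJoin S 𝒰 n)) / n ≤
      Real.log (coverNum (iterJoin T 𝒱 n)) / n := by
    exact div_le_div_of_nonneg_right (log_nat_mono (h n)) (Nat.cast_nonneg n)
  exact EReal.coe_le_coe_iff.2 hlog

/-- `𝒱` refines `𝒰`. -/
def Refines (𝒱 𝒰 : Set (Set X)) : Prop := ∀ V ∈ 𝒱, ∃ U ∈ 𝒰, V ⊆ U

lemma Refines.iterJoin {𝒱 𝒰 : Set (Set X)} (h : Refines 𝒱 𝒰) (T : X → X) (n : ℕ) :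
    Refines (iterJoin T 𝒱 n) (iterJoin T 𝒰 n) := by
  rintro V ⟨v, hv, rfl⟩
  choose u hu hvu using fun j => h (v j) (hv j)
  exact ⟨⋂ j : Fin n, T^[(j:ℕ)] ⁻¹' u j, ⟨u, hu, rfl⟩,
    Set.iInter_mono fun j => Set.preimage_mono (hvu j)⟩

lemma coverNum_le_of_refines [CompactSpace X] {𝒱 𝒰 : Set (Set X)}
    (h𝒱 : IsOpenCover 𝒱) (href : Refines 𝒱 𝒰) : coverNum 𝒰 ≤ coverNum 𝒱 := by
  obtain ⟨F, hF𝒱, hFcov, hFcard⟩ := exists_finite_subcover h𝒱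
  classical
  set r : Set X → Set X := fun V => if h : ∃ U ∈ 𝒰, V ⊆ U then h.choose else ∅ with hr
  have hrmem : ∀ V ∈ 𝒱, r V ∈ 𝒰 ∧ V ⊆ r V := by
    intro V hV
    have h : ∃ U ∈ 𝒰, V ⊆ U := href V hV
    simp only [hr, dif_pos h]
    exact ⟨h.choose_spec.1, h.choose_spec.2⟩
  refine le_trans (coverNum_le_card (F := F.image r) ?_ ?_) ?_
  · intro U hU
    simp only [Finset.coe_image, Set.mem_image] at hU
    obtain ⟨V, hV, rfl⟩ := hU
    exact (hrmem V (hF𝒱 hV)).1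
  · apply Set.eq_univ_of_forall
    intro x
    have hx : x ∈ ⋃₀ (↑F : Set (Set X)) := hFcov.symm ▸ Set.mem_univ x
    obtain ⟨V, hV, hxV⟩ := hx
    exact ⟨r V, by simp only [Finset.coe_image]; exact Set.mem_image_of_mem r hV,
      (hrmem V (hF𝒱 hV)).2 hxV⟩
  · rw [← hFcard]; exact Finset.card_image_le

lemma coverEntropy_le_of_refines [CompactSpace X] {T : X → X} (hT : Continuous T)
    {𝒱 𝒰 : Set (Set X)} (h𝒱 : IsOpenCover 𝒱) (href : Refines 𝒱 𝒰) :
    coverEntropy T 𝒰 ≤ coverEntropy T 𝒱 :=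
  coverEntropy_mono fun n => coverNum_le_of_refines
    (iterJoin_isOpenCover hT h𝒱 n) (href.iterJoin T n)

lemma coverEntropy_le_entropy (T : X → X) {𝒰 : Set (Set X)} (h𝒰 : IsOpenCover 𝒰) :
    coverEntropy T 𝒰 ≤ entropy T := by
  exact le_iSup₂_of_le 𝒰 h𝒰 le_rfl

/-- Topological entropy does not increase when passing to a factor. -/
lemma entropy_factor_le [CompactSpace X] {T : X → X} {S : Y → Y} {π : X → Y}
    (hT : Continuous T) (hπ : Continuous π) (hsurj : Function.Surjective π)
    (hcomm : ∀ x, π (T x) = S (π x)) : entropy S ≤ entropy T := by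
  refine iSup₂_le fun 𝒰 h𝒰 => ?_
  set 𝒰' : Set (Set X) := (fun U => π ⁻¹' U) '' 𝒰 with h𝒰'def
  have h𝒰' : IsOpenCover 𝒰' := by
    constructor
    · rintro V ⟨U, hU, rfl⟩
      exact (h𝒰.1 U hU).preimage hπ
    · apply Set.eq_univ_of_forall
      intro x
      have hx : π x ∈ ⋃₀ 𝒰 := h𝒰.2.symm ▸ Set.mem_univ _
      obtain ⟨U, hU, hxU⟩ := hx
      exact ⟨π ⁻¹' U, Set.mem_image_of_mem _ hU, hxU⟩
  have hit : ∀ (j : ℕ) (x : X), π (T^[j] x) = S^[j] (π x) := fun j =>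
    (Function.Semiconj.iterate_right hcomm j)
  have hpre : ∀ {n : ℕ} (u : Fin n → Set Y),
      π ⁻¹' (⋂ j : Fin n, S^[(j:ℕ)] ⁻¹' u j) = ⋂ j : Fin n, T^[(j:ℕ)] ⁻¹' (π ⁻¹' u j) := by
    intro n u
    ext x
    simp only [Set.mem_preimage, Set.mem_iInter]
    exact forall_congr' fun j => by rw [hit]
  have hkey : ∀ n, iterJoin T 𝒰' n = (fun W => π ⁻¹' W) '' (iterJoin S 𝒰 n) := by
    intro n
    ext W
    constructor
    · rintro ⟨v, hv, rfl⟩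
      choose u hu huv using fun j => hv j
      refine ⟨⋂ j : Fin n, S^[(j:ℕ)] ⁻¹' u j, ⟨u, hu, rfl⟩, ?_⟩
      show π ⁻¹' _ = _
      rw [hpre]
      exact Set.iInter_congr fun j => congrArg (fun U => T^[(j:ℕ)] ⁻¹' U) (huv j)
    · rintro ⟨W', ⟨u, hu, rfl⟩, rfl⟩
      exact ⟨fun j => π ⁻¹' u j, fun j => Set.mem_image_of_mem _ (hu j), hpre u⟩
  refine le_trans (coverEntropy_mono fun n => ?_) (coverEntropy_le_entropy T h𝒰')
  obtain ⟨F, hF, hFcov, hFcard⟩ := exists_finite_subcover (iterJoin_isOpenCover hT h𝒰' n)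
  classical
  set σ : Set X → Set Y := fun W =>
    if h : ∃ W' ∈ iterJoin S 𝒰 n, π ⁻¹' W' = W then h.choose else ∅ with hσ
  have hσspec : ∀ W ∈ F, σ W ∈ iterJoin S 𝒰 n ∧ π ⁻¹' (σ W) = W := by
    intro W hW
    have hmem : W ∈ (fun W => π ⁻¹' W) '' (iterJoin S 𝒰 n) := (hkey n) ▸ hF hW
    have h : ∃ W' ∈ iterJoin S 𝒰 n, π ⁻¹' W' = W := by
      obtain ⟨W', hW', rfl⟩ := hmem; exact ⟨W', hW', rfl⟩
    simp only [hσ, dif_pos h]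
    exact ⟨h.choose_spec.1, h.choose_spec.2⟩
  refine le_trans (coverNum_le_card (F := F.image σ) ?_ ?_) ?_
  · intro W' hW'
    simp only [Finset.coe_image, Set.mem_image] at hW'
    obtain ⟨W, hW, rfl⟩ := hW'
    exact (hσspec W hW).1
  · apply Set.eq_univ_of_forall
    intro y
    obtain ⟨x, rfl⟩ := hsurj y
    have hx : x ∈ ⋃₀ (↑F : Set (Set X)) := hFcov.symm ▸ Set.mem_univ x
    obtain ⟨W, hW, hxW⟩ := hx
    refine ⟨σ W, by simp only [Finset.coe_image]; exact Set.mem_image_of_mem σ hW, ?_⟩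
    have := (hσspec W hW).2
    rw [← this] at hxW
    exact hxW
  · rw [← hFcard]; exact Finset.card_image_le

end Anqie

namespace Anqie

set_option linter.unusedSectionVars false

open Filter Set

variable {X : Type*} [TopologicalSpace X]

/-- Topological entropy does not increase when restricting to a closed invariant subset. -/
lemma entropy_restrict_le [CompactSpace X] {T : X → X} (hT : Continuous T)
    {Z : Set X} (hZ : IsClosed Z) (hinv : Set.MapsTo T Z Z) :
    entropy (hinv.restrict T Z Z) ≤ entropy T := by
  classical
  set T' : Z → Z := hinv.restrict T Z Z with hT'
  have hcomm : ∀ z : Z, ((T' z : X)) = T (z : X) := fun z => rfl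
  have hit : ∀ (j : ℕ) (z : Z), ((T'^[j] z : X)) = T^[j] (z : X) := fun j =>
    Function.Semiconj.iterate_right hcomm j
  refine iSup₂_le fun 𝒰' h𝒰' => ?_
  set e : Set Z → Set X := fun U' =>
    if h : ∃ U : Set X, IsOpen U ∧ (Subtype.val : Z → X) ⁻¹' U = U' then h.choose else ∅
    with he
  have hespec : ∀ U' ∈ 𝒰', IsOpen (e U') ∧ (Subtype.val : Z → X) ⁻¹' (e U') = U' := by
    intro U' hU'
    have h : ∃ U : Set X, IsOpen U ∧ (Subtype.val : Z → X) ⁻¹' U = U' :=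
      isOpen_induced_iff.1 (h𝒰'.1 U' hU')
    simp only [he, dif_pos h]
    exact ⟨h.choose_spec.1, h.choose_spec.2⟩
  set 𝒰 : Set (Set X) := (e '' 𝒰') ∪ {Zᶜ} with h𝒰def
  have h𝒰 : IsOpenCover 𝒰 := by
    constructor
    · rintro U (⟨U', hU', rfl⟩ | hU)
      · exact (hespec U' hU').1
      · simp only [Set.mem_singleton_iff] at hU
        subst hU
        exact hZ.isOpen_compl
    · apply Set.eq_univ_of_forall
      intro x
      by_cases hx : x ∈ Z
      · have hmem : (⟨x, hx⟩ : Z) ∈ ⋃₀ 𝒰' := h𝒰'.2.symm ▸ Set.mem_univ _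
        obtain ⟨U', hU', hxU'⟩ := hmem
        refine ⟨e U', Set.mem_union_left _ (Set.mem_image_of_mem _ hU'), ?_⟩
        have := (hespec U' hU').2
        rw [← this] at hxU'
        exact hxU'
      · exact ⟨Zᶜ, Set.mem_union_right _ rfl, hx⟩
  have hpre : ∀ {n : ℕ} (u : Fin n → Set X),
      (Subtype.val : Z → X) ⁻¹' (⋂ j : Fin n, T^[(j:ℕ)] ⁻¹' u j) =
        ⋂ j : Fin n, T'^[(j:ℕ)] ⁻¹' ((Subtype.val : Z → X) ⁻¹' u j) := by
    intro n u
    ext z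
    simp only [Set.mem_preimage, Set.mem_iInter]
    exact forall_congr' fun j => by rw [hit]
  refine le_trans (coverEntropy_mono fun n => ?_) (coverEntropy_le_entropy T h𝒰)
  obtain ⟨F, hF, hFcov, hFcard⟩ := exists_finite_subcover (iterJoin_isOpenCover hT h𝒰 n)
  set G : Finset (Set Z) := (F.filter (· ∈ iterJoin T (e '' 𝒰') n)).image
    (fun W => (Subtype.val : Z → X) ⁻¹' W) with hG
  have hGsub : (↑G : Set (Set Z)) ⊆ iterJoin T' 𝒰' n := by
    intro V hV
    simp only [hG, Finset.coe_image, Set.mem_image, Finset.coe_filter, Set.mem_setOf_eq] at hV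
    obtain ⟨W, ⟨hWF, u, hu, rfl⟩, rfl⟩ := hV
    refine ⟨fun j => (Subtype.val : Z → X) ⁻¹' (u j), fun j => ?_, hpre u⟩
    obtain ⟨U', hU', hUe⟩ := hu j
    show (Subtype.val : Z → X) ⁻¹' (u j) ∈ 𝒰'
    rw [← hUe, (hespec U' hU').2]
    exact hU'
  have hGcov : ⋃₀ (↑G : Set (Set Z)) = Set.univ := by
    apply Set.eq_univ_of_forall
    intro z
    have hz : (z : X) ∈ ⋃₀ (↑F : Set (Set X)) := hFcov.symm ▸ Set.mem_univ _
    obtain ⟨W, hWF, hzW⟩ := hz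
    obtain ⟨u, hu, rfl⟩ := hF hWF
    have hgood : ∀ j, u j ∈ e '' 𝒰' := by
      intro j
      rcases hu j with h | h
      · exact h
      · exfalso
        simp only [Set.mem_singleton_iff] at h
        have hzj : T^[(j:ℕ)] (z : X) ∈ u j := Set.mem_iInter.1 hzW j
        rw [h] at hzj
        exact hzj (Set.MapsTo.iterate hinv (j:ℕ) z.2)
    refine ⟨(Subtype.val : Z → X) ⁻¹' (⋂ j : Fin n, T^[(j:ℕ)] ⁻¹' u j), ?_, hzW⟩
    simp only [hG, Finset.coe_image, Set.mem_image, Finset.coe_filter, Set.mem_setOf_eq]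
    exact ⟨_, ⟨hWF, u, hgood, rfl⟩, rfl⟩
  refine le_trans (coverNum_le_card hGsub hGcov) ?_
  rw [← hFcard]
  exact le_trans Finset.card_image_le (Finset.card_filter_le _ _)

end Anqie

namespace Anqie

set_option linter.unusedSectionVars false
set_option maxHeartbeats 1000000

open Filter Set

variable {X Y : Type*} [TopologicalSpace X] [TopologicalSpace Y]

lemma coverNum_pos' [CompactSpace X] [Nonempty X] {𝒱 : Set (Set X)}
    (h : IsOpenCover 𝒱) : 0 < coverNum 𝒱 := by
  obtain ⟨F, hF, hcov, hcard⟩ := exists_finite_subcover h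
  exact coverNum_pos hF hcov hcard

/-- Any open cover of a product of compact spaces is refined by a product cover. -/
lemma exists_prod_cover_refines [CompactSpace X] [CompactSpace Y]
    {𝒲 : Set (Set (X × Y))} (h𝒲 : IsOpenCover 𝒲) :
    ∃ (𝒜 : Set (Set X)) (ℬ : Set (Set Y)), IsOpenCover 𝒜 ∧ IsOpenCover ℬ ∧
      ∀ A ∈ 𝒜, ∀ B ∈ ℬ, ∃ W ∈ 𝒲, A ×ˢ B ⊆ W := by
  classical
  have H : ∀ (x : X) (y : Y), ∃ (u : Set X) (v : Set Y),
      IsOpen u ∧ IsOpen v ∧ x ∈ u ∧ y ∈ v ∧ ∃ W ∈ 𝒲, u ×ˢ v ⊆ W := by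
    intro x y
    have hxy : (x, y) ∈ ⋃₀ 𝒲 := h𝒲.2.symm ▸ Set.mem_univ _
    obtain ⟨W, hW, hxyW⟩ := hxy
    obtain ⟨u, v, hu, hv, hxu, hyv, huv⟩ := (isOpen_prod_iff.1 (h𝒲.1 W hW)) x y hxyW
    exact ⟨u, v, hu, hv, hxu, hyv, W, hW, huv⟩
  choose U V hUopen hVopen hxU hyV hsub using H
  have hscover : ∀ x : X, ∃ s : Finset Y, Set.univ ⊆ ⋃ y ∈ s, V x y := by
    intro x
    exact IsCompact.elim_finite_subcover isCompact_univ (fun y => V x y)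
      (fun y => hVopen x y) (fun y _ => Set.mem_iUnion.2 ⟨y, hyV x y⟩)
  choose s hs using hscover
  set A : X → Set X := fun x => ⋂ y ∈ s x, U x y with hA
  have hAopen : ∀ x, IsOpen (A x) :=
    fun x => Set.Finite.isOpen_biInter (s x).finite_toSet (fun y _ => hUopen x y)
  have hxA : ∀ x, x ∈ A x := fun x => Set.mem_biInter fun y _ => hxU x y
  obtain ⟨t, ht⟩ := IsCompact.elim_finite_subcover isCompact_univ A hAopen
    (fun x _ => Set.mem_iUnion.2 ⟨x, hxA x⟩)
  refine ⟨A '' ↑t, {B | ∃ c : X → Y, (∀ x ∈ t, c x ∈ s x) ∧ B = ⋂ x ∈ t, V x (c x)},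
    ⟨?_, ?_⟩, ⟨?_, ?_⟩, ?_⟩
  · rintro _ ⟨x, _, rfl⟩; exact hAopen x
  · apply Set.eq_univ_of_forall
    intro x
    obtain ⟨x₀, hx₀t, hx₀⟩ := Set.mem_iUnion₂.1 (ht (Set.mem_univ x))
    exact ⟨A x₀, Set.mem_image_of_mem _ hx₀t, hx₀⟩
  · rintro _ ⟨c, hc, rfl⟩
    exact Set.Finite.isOpen_biInter t.finite_toSet (fun x _ => hVopen x (c x))
  · apply Set.eq_univ_of_forall
    intro y
    have : ∀ x : X, ∃ y' : Y, y' ∈ s x ∧ y ∈ V x y' := by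
      intro x
      obtain ⟨y', hy's, hy'⟩ := Set.mem_iUnion₂.1 (hs x (Set.mem_univ y))
      exact ⟨y', hy's, hy'⟩
    choose c hc1 hc2 using this
    exact ⟨⋂ x ∈ t, V x (c x), ⟨c, fun x _ => hc1 x, rfl⟩,
      Set.mem_biInter fun x _ => hc2 x⟩
  · rintro _ ⟨x₀, hx₀t, rfl⟩ _ ⟨c, hc, rfl⟩
    obtain ⟨W, hW, hWsub⟩ := hsub x₀ (c x₀)
    refine ⟨W, hW, le_trans (Set.prod_mono ?_ ?_) hWsub⟩
    · exact Set.biInter_subset_of_mem (hc x₀ hx₀t)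
    · exact Set.biInter_subset_of_mem hx₀t

lemma prodCover_isOpenCover {𝒜 : Set (Set X)} {ℬ : Set (Set Y)}
    (h𝒜 : IsOpenCover 𝒜) (hℬ : IsOpenCover ℬ) :
    IsOpenCover (Set.image2 (· ×ˢ ·) 𝒜 ℬ) := by
  constructor
  · rintro _ ⟨A, hA, B, hB, rfl⟩
    exact (h𝒜.1 A hA).prod (hℬ.1 B hB)
  · apply Set.eq_univ_of_forall
    rintro ⟨x, y⟩
    have hx : x ∈ ⋃₀ 𝒜 := h𝒜.2.symm ▸ Set.mem_univ _
    have hy : y ∈ ⋃₀ ℬ := hℬ.2.symm ▸ Set.mem_univ _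
    obtain ⟨A, hA, hxA⟩ := hx
    obtain ⟨B, hB, hyB⟩ := hy
    exact ⟨A ×ˢ B, Set.mem_image2_of_mem hA hB, hxA, hyB⟩

lemma prod_iterJoin_eq {T : X → X} {S : Y → Y} {n : ℕ} (a : Fin n → Set X)
    (b : Fin n → Set Y) :
    (⋂ j : Fin n, T^[(j:ℕ)] ⁻¹' a j) ×ˢ (⋂ j : Fin n, S^[(j:ℕ)] ⁻¹' b j) =
      ⋂ j : Fin n, (Prod.map T S)^[(j:ℕ)] ⁻¹' (a j ×ˢ b j) := by
  ext p
  simp only [Set.mem_prod, Set.mem_iInter, Set.mem_preimage, Prod.map_iterate,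
    Prod.map_apply]
  exact (forall_and).symm

lemma coverNum_prod_le [CompactSpace X] [CompactSpace Y] {T : X → X} {S : Y → Y}
    (hT : Continuous T) (hS : Continuous S) {𝒜 : Set (Set X)} {ℬ : Set (Set Y)}
    (h𝒜 : IsOpenCover 𝒜) (hℬ : IsOpenCover ℬ) (n : ℕ) :
    coverNum (iterJoin (Prod.map T S) (Set.image2 (· ×ˢ ·) 𝒜 ℬ) n) ≤
      coverNum (iterJoin T 𝒜 n) * coverNum (iterJoin S ℬ n) := by
  classical
  obtain ⟨FA, hFA, hFAcov, hFAcard⟩ := exists_finite_subcover (iterJoin_isOpenCover hT h𝒜 n)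
  obtain ⟨FB, hFB, hFBcov, hFBcard⟩ := exists_finite_subcover (iterJoin_isOpenCover hS hℬ n)
  refine le_trans (coverNum_le_card (F := Finset.image₂ (· ×ˢ ·) FA FB) ?_ ?_) ?_
  · intro W hW
    simp only [Finset.coe_image₂, Set.mem_image2] at hW
    obtain ⟨A', hA', B', hB', rfl⟩ := hW
    obtain ⟨a, ha, rfl⟩ := hFA hA'
    obtain ⟨b, hb, rfl⟩ := hFB hB'
    refine ⟨fun j => a j ×ˢ b j, fun j => Set.mem_image2_of_mem (ha j) (hb j), ?_⟩
    exact prod_iterJoin_eq (T := T) (S := S) a b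
  · apply Set.eq_univ_of_forall
    rintro ⟨x, y⟩
    have hx : x ∈ ⋃₀ (↑FA : Set (Set X)) := hFAcov.symm ▸ Set.mem_univ _
    have hy : y ∈ ⋃₀ (↑FB : Set (Set Y)) := hFBcov.symm ▸ Set.mem_univ _
    obtain ⟨A', hA', hxA⟩ := hx
    obtain ⟨B', hB', hyB⟩ := hy
    refine ⟨A' ×ˢ B', ?_, hxA, hyB⟩
    simp only [Finset.coe_image₂]
    exact Set.mem_image2_of_mem hA' hB'
  · rw [← hFAcard, ← hFBcard]
    exact Finset.card_image₂_le _ _ _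

lemma coverEntropy_prod_le [CompactSpace X] [CompactSpace Y] [Nonempty X] [Nonempty Y]
    {T : X → X} {S : Y → Y} (hT : Continuous T) (hS : Continuous S)
    {𝒜 : Set (Set X)} {ℬ : Set (Set Y)} (h𝒜 : IsOpenCover 𝒜) (hℬ : IsOpenCover ℬ) :
    coverEntropy (Prod.map T S) (Set.image2 (· ×ˢ ·) 𝒜 ℬ) ≤
      coverEntropy T 𝒜 + coverEntropy S ℬ := by
  set uA : ℕ → EReal := fun n => ((Real.log (coverNum (iterJoin T 𝒜 n)) / n : ℝ) : EReal)
    with huA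
  set uB : ℕ → EReal := fun n => ((Real.log (coverNum (iterJoin S ℬ n)) / n : ℝ) : EReal)
    with huB
  have hA0 : ∀ n, (0 : EReal) ≤ uA n := fun n =>
    EReal.coe_nonneg.2 (div_nonneg (Real.log_natCast_nonneg _) (Nat.cast_nonneg n))
  have hB0 : ∀ n, (0 : EReal) ≤ uB n := fun n =>
    EReal.coe_nonneg.2 (div_nonneg (Real.log_natCast_nonneg _) (Nat.cast_nonneg n))
  have hlimA : (0 : EReal) ≤ Filter.atTop.limsup uA :=
    le_limsup_of_frequently_le (Filter.Frequently.of_forall hA0)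
  have hlimB : (0 : EReal) ≤ Filter.atTop.limsup uB :=
    le_limsup_of_frequently_le (Filter.Frequently.of_forall hB0)
  have hstep : coverEntropy (Prod.map T S) (Set.image2 (· ×ˢ ·) 𝒜 ℬ) ≤
      Filter.atTop.limsup (uA + uB) := by
    refine Filter.limsup_le_limsup (Filter.Eventually.of_forall fun n => ?_)
    have hposA : 0 < coverNum (iterJoin T 𝒜 n) :=
      coverNum_pos' (iterJoin_isOpenCover hT h𝒜 n)
    have hposB : 0 < coverNum (iterJoin S ℬ n) :=
      coverNum_pos' (iterJoin_isOpenCover hS hℬ n)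
    have hreal : Real.log (coverNum (iterJoin (Prod.map T S)
        (Set.image2 (· ×ˢ ·) 𝒜 ℬ) n)) / n ≤
        Real.log (coverNum (iterJoin T 𝒜 n)) / n +
          Real.log (coverNum (iterJoin S ℬ n)) / n := by
      rw [← add_div]
      refine div_le_div_of_nonneg_right ?_ (Nat.cast_nonneg n)
      have hle := log_nat_mono (coverNum_prod_le hT hS h𝒜 hℬ n)
      refine le_trans hle ?_
      rw [Nat.cast_mul, Real.log_mul (by exact_mod_cast hposA.ne')
        (by exact_mod_cast hposB.ne')]
    calc ((Real.log (coverNum (iterJoin (Prod.map T S)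
          (Set.image2 (· ×ˢ ·) 𝒜 ℬ) n)) / n : ℝ) : EReal)
        ≤ ((Real.log (coverNum (iterJoin T 𝒜 n)) / n +
            Real.log (coverNum (iterJoin S ℬ n)) / n : ℝ) : EReal) :=
          EReal.coe_le_coe_iff.2 hreal
      _ = uA n + uB n := by rw [EReal.coe_add]
      _ = (uA + uB) n := rfl
  refine le_trans hstep ?_
  exact EReal.limsup_add_le (Or.inl (ne_of_gt (lt_of_lt_of_le EReal.bot_lt_zero hlimA)))
    (Or.inr (ne_of_gt (lt_of_lt_of_le EReal.bot_lt_zero hlimB)))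

/-- Entropy of a product system is at most the sum of the entropies. -/
lemma entropy_prod_le [CompactSpace X] [CompactSpace Y] [Nonempty X] [Nonempty Y]
    {T : X → X} {S : Y → Y} (hT : Continuous T) (hS : Continuous S) :
    entropy (Prod.map T S) ≤ entropy T + entropy S := by
  refine iSup₂_le fun 𝒲 h𝒲 => ?_
  obtain ⟨𝒜, ℬ, h𝒜, hℬ, href⟩ := exists_prod_cover_refines h𝒲
  have hrefines : Refines (Set.image2 (· ×ˢ ·) 𝒜 ℬ) 𝒲 := by
    rintro _ ⟨A, hA, B, hB, rfl⟩
    exact href A hA B hB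
  refine le_trans (coverEntropy_le_of_refines (hT.prodMap hS)
    (prodCover_isOpenCover h𝒜 hℬ) hrefines) ?_
  exact le_trans (coverEntropy_prod_le hT hS h𝒜 hℬ)
    (add_le_add (coverEntropy_le_entropy T h𝒜) (coverEntropy_le_entropy S hℬ))

end Anqie

namespace Anqie

set_option linter.unusedSectionVars false
set_option maxHeartbeats 1000000

open Filter Set

variable {E E' : Type*} [TopologicalSpace E] [TopologicalSpace E']

lemma orbitClosure_nonempty (f : ℕ → E) : (orbitClosure f).Nonempty :=
  ⟨f, subset_closure ⟨0, fun k => by rw [zero_add]⟩⟩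

lemma orbitClosure_isCompact [T2Space E] {f : ℕ → E} {K : Set E} (hK : IsCompact K)
    (hf : ∀ n, f n ∈ K) : IsCompact (orbitClosure f) := by
  have hsub : orbitClosure f ⊆ Set.pi Set.univ (fun _ : ℕ => K) := by
    refine closure_minimal ?_ (isClosed_set_pi fun _ _ => hK.isClosed)
    rintro ω ⟨n, hn⟩ k _
    rw [hn k]
    exact hf _
  exact (isCompact_univ_pi fun _ => hK).of_isClosed_subset isClosed_closure hsub

lemma continuous_shiftOn (f : ℕ → E) : Continuous (shiftOn f) := by
  apply Continuous.subtype_mk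
  exact continuous_pi fun k => (continuous_apply (k + 1)).comp continuous_subtype_val

lemma mapsTo_orbit_comp (φ : E → E') (f : ℕ → E) :
    Set.MapsTo (fun (ω : ℕ → E) (k : ℕ) => φ (ω k)) (orbitSet f)
      (orbitSet fun n => φ (f n)) := by
  rintro ω ⟨n, hn⟩
  exact ⟨n, fun k => congrArg φ (hn k)⟩

lemma mem_orbitClosure_comp {φ : E → E'} (hφ : Continuous φ) {f : ℕ → E}
    {ω : ℕ → E} (hω : ω ∈ orbitClosure f) :
    (fun k => φ (ω k)) ∈ orbitClosure (fun n => φ (f n)) := by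
  have hΦ : Continuous fun (ω : ℕ → E) (k : ℕ) => φ (ω k) :=
    continuous_pi fun k => hφ.comp (continuous_apply k)
  exact map_mem_closure hΦ hω (mapsTo_orbit_comp φ f)

/-- Factor step: applying a continuous map coordinatewise does not increase anqie
entropy, provided the orbit closure of the source is compact. -/
lemma AE_comp_le [T2Space E'] {f : ℕ → E} (hcpt : IsCompact (orbitClosure f))
    (φ : E → E') (hφ : Continuous φ) : AE (fun n => φ (f n)) ≤ AE f := by
  set g : ℕ → E' := fun n => φ (f n) with hg
  set Φ : (ℕ → E) → (ℕ → E') := fun ω k => φ (ω k) with hΦdef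
  have hΦ : Continuous Φ := continuous_pi fun k => hφ.comp (continuous_apply k)
  have hmaps : ∀ ω ∈ orbitClosure f, Φ ω ∈ orbitClosure g := fun ω hω =>
    mem_orbitClosure_comp hφ hω
  have hsurjset : orbitClosure g ⊆ Φ '' orbitClosure f := by
    refine closure_minimal ?_ ((hcpt.image hΦ).isClosed)
    rintro ω ⟨n, hn⟩
    refine ⟨fun k => f (n + k), subset_closure ⟨n, fun k => rfl⟩, ?_⟩
    funext k
    rw [hn k]
  haveI : CompactSpace ↥(orbitClosure f) := isCompact_iff_compactSpace.1 hcpt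
  set π : ↥(orbitClosure f) → ↥(orbitClosure g) :=
    fun ω => ⟨Φ ω.val, hmaps ω.val ω.2⟩ with hπdef
  refine entropy_factor_le (π := π) (continuous_shiftOn f) ?_ ?_ ?_
  · exact Continuous.subtype_mk (hΦ.comp continuous_subtype_val) _
  · rintro ⟨ω, hω⟩
    obtain ⟨ω', hω', hΦω⟩ := hsurjset hω
    exact ⟨⟨ω', hω'⟩, Subtype.ext hΦω⟩
  · intro x
    exact Subtype.ext rfl

lemma mem_orbitClosure_fst {f : ℕ → E} {g : ℕ → E'} {ω : ℕ → E × E'}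
    (hω : ω ∈ orbitClosure fun n => (f n, g n)) :
    (fun k => (ω k).1) ∈ orbitClosure f := by
  have := mem_orbitClosure_comp (φ := Prod.fst) continuous_fst hω
  simpa using this

lemma mem_orbitClosure_snd {f : ℕ → E} {g : ℕ → E'} {ω : ℕ → E × E'}
    (hω : ω ∈ orbitClosure fun n => (f n, g n)) :
    (fun k => (ω k).2) ∈ orbitClosure g := by
  have := mem_orbitClosure_comp (φ := Prod.snd) continuous_snd hω
  simpa using this

/-- Subsystem-of-product step: the anqie entropy of the paired sequence is at most
the sum of the anqie entropies. -/
lemma AE_pair_le {f : ℕ → E} {g : ℕ → E'} (hf : IsCompact (orbitClosure f))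
    (hg : IsCompact (orbitClosure g)) :
    AE (fun n => (f n, g n)) ≤ AE f + AE g := by
  set P : ℕ → E × E' := fun n => (f n, g n) with hP
  haveI : CompactSpace ↥(orbitClosure f) := isCompact_iff_compactSpace.1 hf
  haveI : CompactSpace ↥(orbitClosure g) := isCompact_iff_compactSpace.1 hg
  haveI : Nonempty ↥(orbitClosure f) := (orbitClosure_nonempty f).to_subtype
  haveI : Nonempty ↥(orbitClosure g) := (orbitClosure_nonempty g).to_subtype
  set W := ↥(orbitClosure f) × ↥(orbitClosure g) with hW
  set q : W → (ℕ → E × E') := fun p => fun k => ((p.1 : ℕ → E) k, (p.2 : ℕ → E') k)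
    with hq
  have hqcont : Continuous q := continuous_pi fun k =>
    (((continuous_apply k).comp (continuous_subtype_val.comp continuous_fst)).prodMk
      ((continuous_apply k).comp (continuous_subtype_val.comp continuous_snd)))
  set Z : Set W := q ⁻¹' (orbitClosure P) with hZ
  have hZclosed : IsClosed Z := isClosed_closure.preimage hqcont
  set Tprod : W → W := Prod.map (shiftOn f) (shiftOn g) with hTprod
  have hTprodcont : Continuous Tprod := (continuous_shiftOn f).prodMap (continuous_shiftOn g)
  have hinv : Set.MapsTo Tprod Z Z := by
    intro p hp
    show q (Tprod p) ∈ orbitClosure P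
    have : q (Tprod p) = fun k => (q p) (k + 1) := rfl
    rw [this]
    exact shift_mem_orbitClosure P hp
  have hqshift : ∀ p : W, q (Tprod p) = fun k => (q p) (k + 1) := fun p => rfl
  -- entropy (shiftOn P) ≤ entropy of restriction of Tprod to Z
  set T'' := hinv.restrict Tprod Z Z with hT''
  have step1 : entropy (shiftOn P) ≤ entropy T'' := by
    haveI : CompactSpace ↥Z := isCompact_iff_compactSpace.1 (hZclosed.isCompact)
    set π : ↥Z → ↥(orbitClosure P) := fun z => ⟨q z.val, z.2⟩ with hπ
    refine entropy_factor_le (π := π) (Continuous.restrict hinv hTprodcont) ?_ ?_ ?_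
    · exact Continuous.subtype_mk (hqcont.comp continuous_subtype_val) _
    · rintro ⟨ω, hω⟩
      have h1 : (fun k => (ω k).1) ∈ orbitClosure f := mem_orbitClosure_fst hω
      have h2 : (fun k => (ω k).2) ∈ orbitClosure g := mem_orbitClosure_snd hω
      have hqeq : q (⟨fun k => (ω k).1, h1⟩, ⟨fun k => (ω k).2, h2⟩) = ω := by
        funext k; rfl
      refine ⟨⟨(⟨fun k => (ω k).1, h1⟩, ⟨fun k => (ω k).2, h2⟩), ?_⟩, ?_⟩
      · show q _ ∈ orbitClosure P
        rw [hqeq]; exact hω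
      · exact Subtype.ext hqeq
    · intro z
      exact Subtype.ext rfl
  have step2 : entropy T'' ≤ entropy Tprod :=
    entropy_restrict_le hTprodcont hZclosed hinv
  have step3 : entropy Tprod ≤ entropy (shiftOn f) + entropy (shiftOn g) :=
    entropy_prod_le (continuous_shiftOn f) (continuous_shiftOn g)
  exact le_trans step1 (le_trans step2 step3)

end Anqie

namespace Anqie

open Filter Set

lemma bounded_orbitClosure_isCompact {f : ℕ → ℂ} {M : ℝ} (hM : ∀ n, ‖f n‖ ≤ M) :
    IsCompact (orbitClosure f) :=
  orbitClosure_isCompact (isCompact_closedBall (0 : ℂ) M)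
    (fun n => by simpa [Metric.mem_closedBall, dist_zero_right] using hM n)

/-- Master lemma: the anqie entropy of a continuous combination of two bounded
sequences is at most the sum of their anqie entropies. -/
lemma AE_op_le {f g h : ℕ → ℂ} (hf : ∃ M : ℝ, ∀ n, ‖f n‖ ≤ M)
    (hg : ∃ M : ℝ, ∀ n, ‖g n‖ ≤ M) (op : ℂ × ℂ → ℂ) (hop : Continuous op)
    (hh : ∀ n, h n = op (f n, g n)) : AE h ≤ AE f + AE g := by
  obtain ⟨Mf, hMf⟩ := hf
  obtain ⟨Mg, hMg⟩ := hg
  have hcf : IsCompact (orbitClosure f) := bounded_orbitClosure_isCompact hMf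
  have hcg : IsCompact (orbitClosure g) := bounded_orbitClosure_isCompact hMg
  have hcP : IsCompact (orbitClosure fun n => (f n, g n)) := by
    refine orbitClosure_isCompact
      ((isCompact_closedBall (0 : ℂ) Mf).prod (isCompact_closedBall (0 : ℂ) Mg)) ?_
    intro n
    constructor
    · simpa [Metric.mem_closedBall, dist_zero_right] using hMf n
    · simpa [Metric.mem_closedBall, dist_zero_right] using hMg n
  have heq : h = fun n => op (f n, g n) := funext hh
  rw [heq]
  calc AE (fun n => op (f n, g n)) ≤ AE (fun n => (f n, g n)) :=
        AE_comp_le hcP op hop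
    _ ≤ AE f + AE g := AE_pair_le hcf hcg

end Anqie

/-- For bounded `f g : ℕ → ℂ`:
`AE(f+g), AE(f−g), AE(f·g) ≤ AE(f)+AE(g)`, and
`AE(f) ≤ AE(f+g)+AE(g)`, `AE(g) ≤ AE(f+g)+AE(f)`. -/
theorem anqie_entropy_add_sub_mul_ineq (f g : ℕ → ℂ)
    (hf : ∃ M : ℝ, ∀ n, ‖f n‖ ≤ M) (hg : ∃ M : ℝ, ∀ n, ‖g n‖ ≤ M) :
    Anqie.AE (f + g) ≤ Anqie.AE f + Anqie.AE g ∧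
    Anqie.AE (f - g) ≤ Anqie.AE f + Anqie.AE g ∧
    Anqie.AE (f * g) ≤ Anqie.AE f + Anqie.AE g ∧
    Anqie.AE f ≤ Anqie.AE (f + g) + Anqie.AE g ∧
    Anqie.AE g ≤ Anqie.AE (f + g) + Anqie.AE f := by
  obtain ⟨Mf, hMf⟩ := hf
  obtain ⟨Mg, hMg⟩ := hg
  have hf' : ∃ M : ℝ, ∀ n, ‖f n‖ ≤ M := ⟨Mf, hMf⟩
  have hg' : ∃ M : ℝ, ∀ n, ‖g n‖ ≤ M := ⟨Mg, hMg⟩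
  have hfg : ∃ M : ℝ, ∀ n, ‖(f + g) n‖ ≤ M :=
    ⟨Mf + Mg, fun n => le_trans (norm_add_le _ _) (add_le_add (hMf n) (hMg n))⟩
  refine ⟨?_, ?_, ?_, ?_, ?_⟩
  · exact Anqie.AE_op_le hf' hg' (fun p => p.1 + p.2) (continuous_fst.add continuous_snd)
      (fun n => rfl)
  · exact Anqie.AE_op_le hf' hg' (fun p => p.1 - p.2) (continuous_fst.sub continuous_snd)
      (fun n => rfl)
  · exact Anqie.AE_op_le hf' hg' (fun p => p.1 * p.2) (continuous_fst.mul continuous_snd)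
      (fun n => rfl)
  · exact Anqie.AE_op_le hfg hg' (fun p => p.1 - p.2) (continuous_fst.sub continuous_snd)
      (fun n => (add_sub_cancel_right (f n) (g n)).symm)
  · exact Anqie.AE_op_le hfg hf' (fun p => p.1 - p.2) (continuous_fst.sub continuous_snd)
      (fun n => by simp [Pi.add_apply])
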